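/- Let μ be a locally finite positive Borel measure, let F be a family of dyadic intervals with geometric decay in generations: ∑_{F' ∈ C_F^{(n)}(F)} μ(F') ≤ C_δ 2^{−δn} μ(F) for all n ≥ 0 and F ∈ F, where C_F^{(n)}(F) are the n-th generation F-descendants of F. Let {α(F)}_{F∈F} be nonnegative numbers. Then for p = 4, ∫ (∑_{F∈F} α(F)² 1_F(x))² dμ(x) ≤ C ∑_{F∈F} α(F)⁴ μ(F), with C depending only on C_δ and δ. -/

import Mathlib

open MeasureTheory Set
open scoped ENNReal NNReal

/-- The dyadic interval `[k·2ⁿ, (k+1)·2ⁿ)`. -/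
def dyadicInterval (n k : ℤ) : Set ℝ :=
  Set.Ico ((k : ℝ) * 2 ^ n) (((k : ℝ) + 1) * 2 ^ n)

/-- The `n`-th generation descendants of `q₀` in the tree `F` of dyadic intervals. -/
def dyadicGen (F : Set (ℤ × ℤ)) (q₀ : ℤ × ℤ) (n : ℕ) : Set (ℤ × ℤ) :=
  {q | q ∈ F ∧ dyadicInterval q.1 q.2 ⊆ dyadicInterval q₀.1 q₀.2 ∧
    Set.ncard {q' | q' ∈ F ∧ dyadicInterval q.1 q.2 ⊂ dyadicInterval q'.1 q'.2 ∧
      dyadicInterval q'.1 q'.2 ⊆ dyadicInterval q₀.1 q₀.2} = n}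

namespace Stmt17Aux

abbrev DI (q : ℤ × ℤ) : Set ℝ := dyadicInterval q.1 q.2

lemma DI_lt (q : ℤ × ℤ) : (q.2 : ℝ) * 2 ^ q.1 < ((q.2 : ℝ) + 1) * 2 ^ q.1 := by
  have h2 : (0:ℝ) < 2 ^ q.1 := zpow_pos (by norm_num) _
  nlinarith

lemma DI_nonempty (q : ℤ × ℤ) : (DI q).Nonempty :=
  Set.nonempty_Ico.2 (DI_lt q)

lemma measurableSet_DI (q : ℤ × ℤ) : MeasurableSet (DI q) := measurableSet_Ico

lemma subset_of_le_of_inter {p q : ℤ × ℤ} (h : p.1 ≤ q.1)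
    (hne : (DI p ∩ DI q).Nonempty) : DI p ⊆ DI q := by
  obtain ⟨x, ⟨hx1, hx2⟩, hx3, hx4⟩ := hne
  set n := p.1; set k := p.2; set m := q.1; set j := q.2
  set d : ℕ := (m - n).toNat with hd
  have hmd : (2:ℝ) ^ m = (2:ℝ) ^ n * (2 ^ d : ℤ) := by
    push_cast
    rw [← zpow_natCast (2:ℝ) d, ← zpow_add₀ (by norm_num : (2:ℝ) ≠ 0)]
    congr 1
    omega
  have h2n : (0:ℝ) < 2 ^ n := zpow_pos (by norm_num) _
  have hA : j * 2 ^ d ≤ k := by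
    have : (j:ℝ) * 2 ^ m < ((k:ℝ) + 1) * 2 ^ n := lt_of_le_of_lt hx3 hx2
    rw [hmd] at this
    have h' : (j:ℝ) * (2:ℝ)^d * 2 ^ n < ((k:ℝ)+1) * 2 ^ n := by
      push_cast at this; nlinarith
    have : ((j * 2 ^ d : ℤ) : ℝ) < (k:ℝ) + 1 := by
      push_cast
      exact lt_of_mul_lt_mul_right h' h2n.le
    have := (by exact_mod_cast this : (j * 2 ^ d : ℤ) < k + 1)
    omega
  have hB : k + 1 ≤ (j + 1) * 2 ^ d := by
    have : (k:ℝ) * 2 ^ n < ((j:ℝ) + 1) * 2 ^ m := lt_of_le_of_lt hx1 hx4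
    rw [hmd] at this
    have h' : (k:ℝ) * 2 ^ n < ((j:ℝ)+1) * (2:ℝ)^d * 2 ^ n := by
      push_cast at this; nlinarith
    have : (k:ℝ) < (((j + 1) * 2 ^ d : ℤ) : ℝ) := by
      push_cast
      exact lt_of_mul_lt_mul_right h' h2n.le
    have := (by exact_mod_cast this : (k : ℤ) < (j + 1) * 2 ^ d)
    omega
  apply Set.Ico_subset_Ico
  · rw [hmd]
    have : ((j * 2 ^ d : ℤ) : ℝ) ≤ (k : ℝ) := by exact_mod_cast hA
    push_cast at this ⊢
    nlinarith
  · rw [hmd]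
    have : ((k + 1 : ℤ) : ℝ) ≤ (((j + 1) * 2 ^ d : ℤ) : ℝ) := by exact_mod_cast hB
    push_cast at this ⊢
    nlinarith

lemma dichotomy (p q : ℤ × ℤ) : DI p ⊆ DI q ∨ DI q ⊆ DI p ∨ DI p ∩ DI q = ∅ := by
  rcases Set.eq_empty_or_nonempty (DI p ∩ DI q) with he | hne
  · exact Or.inr (Or.inr he)
  rcases le_total p.1 q.1 with h | h
  · exact Or.inl (subset_of_le_of_inter h hne)
  · exact Or.inr (Or.inl (subset_of_le_of_inter h (by rwa [Set.inter_comm] at hne)))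

lemma endpoints_of_subset {p q : ℤ × ℤ} (h : DI p ⊆ DI q) :
    (q.2 : ℝ) * 2 ^ q.1 ≤ (p.2 : ℝ) * 2 ^ p.1 ∧
      ((p.2 : ℝ) + 1) * 2 ^ p.1 ≤ ((q.2 : ℝ) + 1) * 2 ^ q.1 :=
  (Set.Ico_subset_Ico_iff (DI_lt p)).1 h

lemma scale_le_of_subset {p q : ℤ × ℤ} (h : DI p ⊆ DI q) : p.1 ≤ q.1 := by
  obtain ⟨h1, h2⟩ := endpoints_of_subset h
  have h3 : (2:ℝ) ^ p.1 ≤ 2 ^ q.1 := by nlinarith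
  exact le_of_not_gt fun hc => absurd h3 (not_le.2 (zpow_lt_zpow_right₀ (by norm_num) hc))

lemma eq_of_subset_of_scale_eq {p q : ℤ × ℤ} (h : DI p ⊆ DI q) (hs : p.1 = q.1) : p = q := by
  obtain ⟨h1, h2⟩ := endpoints_of_subset h
  rw [hs] at h1 h2
  have h2q : (0:ℝ) < 2 ^ q.1 := zpow_pos (by norm_num) _
  have hk : p.2 = q.2 := by
    have ha : (q.2 : ℝ) ≤ p.2 := le_of_mul_le_mul_right h1 h2q
    have hb : (p.2 : ℝ) + 1 ≤ (q.2 : ℝ) + 1 := le_of_mul_le_mul_right h2 h2q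
    have : (p.2 : ℝ) = q.2 := le_antisymm (by linarith) ha
    exact_mod_cast this
  exact Prod.ext hs hk

lemma DI_inj {p q : ℤ × ℤ} (h : DI p = DI q) : p = q := by
  have h1 : DI p ⊆ DI q := h.le
  have h2 : DI q ⊆ DI p := h.ge
  exact eq_of_subset_of_scale_eq h1 (le_antisymm (scale_le_of_subset h1) (scale_le_of_subset h2))

lemma eq_of_subsets {a b p : ℤ × ℤ} (ha : DI p ⊆ DI a) (hb : DI p ⊆ DI b)
    (hs : a.1 = b.1) : a = b := by
  rcases dichotomy a b with h | h | h
  · exact eq_of_subset_of_scale_eq h hs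
  · exact (eq_of_subset_of_scale_eq h hs.symm).symm
  · obtain ⟨x, hx⟩ := DI_nonempty p
    exact absurd (Set.mem_inter (ha hx) (hb hx)) (h ▸ Set.notMem_empty x)

lemma chain {a b p : ℤ × ℤ} (ha : DI p ⊆ DI a) (hb : DI p ⊆ DI b) :
    DI a ⊆ DI b ∨ DI b ⊆ DI a := by
  rcases dichotomy a b with h | h | h
  · exact Or.inl h
  · exact Or.inr h
  · obtain ⟨x, hx⟩ := DI_nonempty p
    exact absurd (Set.mem_inter (ha hx) (hb hx)) (h ▸ Set.notMem_empty x)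

lemma finite_between (p q : ℤ × ℤ) :
    {q' : ℤ × ℤ | DI p ⊆ DI q' ∧ DI q' ⊆ DI q}.Finite := by
  apply Set.Finite.of_finite_image (f := Prod.fst)
  · apply (Set.finite_Icc p.1 q.1).subset
    rintro m ⟨q', ⟨h1, h2⟩, rfl⟩
    exact ⟨scale_le_of_subset h1, scale_le_of_subset h2⟩
  · rintro a ⟨ha1, _⟩ b ⟨hb1, _⟩ hab
    exact eq_of_subsets ha1 hb1 hab


lemma gen_unique {F : Set (ℤ × ℤ)} {p a b : ℤ × ℤ} {n : ℕ} (ha : a ∈ F) (hb : b ∈ F)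
    (h1 : p ∈ dyadicGen F a n) (h2 : p ∈ dyadicGen F b n) : a = b := by
  obtain ⟨hpF, hpa, hna⟩ := h1
  obtain ⟨-, hpb, hnb⟩ := h2
  have key : ∀ a b : ℤ × ℤ, a ∈ F → b ∈ F → DI p ⊆ DI a → DI p ⊆ DI b →
      Set.ncard {q' | q' ∈ F ∧ DI p ⊂ DI q' ∧ DI q' ⊆ DI a} = n →
      Set.ncard {q' | q' ∈ F ∧ DI p ⊂ DI q' ∧ DI q' ⊆ DI b} = n →
      DI a ⊆ DI b → a = b := by
    intro a b haF hbF hpa hpb hna hnb hab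
    by_contra hne
    have hDIne : DI a ≠ DI b := fun h => hne (DI_inj h)
    have hSab : {q' | q' ∈ F ∧ DI p ⊂ DI q' ∧ DI q' ⊆ DI a} ⊂
        {q' | q' ∈ F ∧ DI p ⊂ DI q' ∧ DI q' ⊆ DI b} := by
      constructor
      · rintro q' ⟨h1, h2, h3⟩
        exact ⟨h1, h2, h3.trans hab⟩
      · intro hcon
        have hbmem : b ∈ {q' | q' ∈ F ∧ DI p ⊂ DI q' ∧ DI q' ⊆ DI b} := by
          refine ⟨hbF, Set.ssubset_iff_subset_ne.2 ⟨hpb, fun h => ?_⟩, subset_rfl⟩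
          exact hDIne (le_antisymm hab (h ▸ hpa))
        have := hcon hbmem
        exact hDIne (le_antisymm hab this.2.2)
    have hfin : {q' | q' ∈ F ∧ DI p ⊂ DI q' ∧ DI q' ⊆ DI b}.Finite := by
      apply (finite_between p b).subset
      rintro q' ⟨-, h2, h3⟩
      exact ⟨h2.subset, h3⟩
    have := Set.ncard_lt_ncard hSab hfin
    omega
  rcases chain hpa hpb with h | h
  · exact key a b ha hb hpa hpb hna hnb h
  · exact (key b a hb ha hpb hpa hnb hna h).symm

lemma tsum_subtype_mono_eq {γ : Type*} {s t : Set γ} (f g : γ → ℝ≥0∞) (hst : s ⊆ t)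
    (h1 : ∀ x ∈ s, g x = f x) (h2 : ∀ x ∈ t, x ∉ s → g x = 0) :
    ∑' x : t, g x = ∑' x : s, f x := by
  rw [tsum_subtype, tsum_subtype]
  apply tsum_congr; intro x
  by_cases hx : x ∈ s
  · rw [Set.indicator_of_mem (hst hx), Set.indicator_of_mem hx, h1 x hx]
  · rw [Set.indicator_of_notMem hx]
    by_cases hx2 : x ∈ t
    · rw [Set.indicator_of_mem hx2, h2 x hx2 hx]
    · rw [Set.indicator_of_notMem hx2]

lemma tsum_cauchy_schwarz {γ : Type*} [Countable γ] (f g : γ → ℝ≥0∞) :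
    ∑' x, f x * g x ≤ (∑' x, f x ^ 2) ^ ((1:ℝ)/2) * (∑' x, g x ^ 2) ^ ((1:ℝ)/2) := by
  letI : MeasurableSpace γ := ⊤
  haveI : MeasurableSingletonClass γ := ⟨fun _ => trivial⟩
  have hf : Measurable f := measurable_of_countable f
  have hg : Measurable g := measurable_of_countable g
  have h := ENNReal.lintegral_mul_le_Lp_mul_Lq (Measure.count : Measure γ)
    Real.HolderConjugate.two_two hf.aemeasurable hg.aemeasurable
  have h2 : ∀ x : ℝ≥0∞, x ^ (2:ℝ) = x ^ 2 := fun x => by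
    rw [show (2:ℝ) = ((2:ℕ):ℝ) by norm_num, ENNReal.rpow_natCast]
  simp only [Pi.mul_apply, lintegral_count, h2] at h
  exact h

lemma tsum_ite_le {γ : Type*} (P : γ → Prop) [∀ x, Decidable (P x)] (c : ℝ≥0∞)
    (h : ∀ a b, P a → P b → a = b) : ∑' x, (if P x then c else 0) ≤ c := by
  by_cases he : ∃ a, P a
  · obtain ⟨a, ha⟩ := he
    rw [tsum_eq_single a (fun b hb => if_neg (fun hPb => hb (h b a hPb ha)))]
    simp [ha]
  · push_neg at he
    simp [he]

end Stmt17Aux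


open Stmt17Aux in
/-- If the family `F` of dyadic intervals has geometric decay in generations with
constants `C_δ, δ`, then for any nonnegative `α(F)` one has the `p = 4` embedding
`∫ (∑_F α(F)² 1_F)² dμ ≤ C ∑_F α(F)⁴ μ(F)` with `C` depending only on `C_δ, δ`. -/
theorem stmt17 (Cδ : ℝ≥0) (δ : ℝ) (hδ : 0 < δ) :
    ∃ C : ℝ≥0∞, C ≠ ⊤ ∧
      ∀ (μ : Measure ℝ), IsLocallyFiniteMeasure μ →
        ∀ (F : Set (ℤ × ℤ)) (α : ℤ × ℤ → ℝ≥0∞),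
          (∀ q₀ ∈ F, ∀ n : ℕ,
            ∑' q : dyadicGen F q₀ n, μ (dyadicInterval q.1.1 q.1.2)
              ≤ (Cδ : ℝ≥0∞) * (2 : ℝ≥0∞) ^ (-(δ * (n : ℝ))) *
                  μ (dyadicInterval q₀.1 q₀.2)) →
          ∫⁻ x,
              (∑' q : F,
                (α q.1) ^ 2 *
                  (dyadicInterval q.1.1 q.1.2).indicator (fun _ => (1 : ℝ≥0∞)) x) ^ 2 ∂μ
            ≤ C * ∑' q : F, (α q.1) ^ 4 * μ (dyadicInterval q.1.1 q.1.2) := by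
  classical
  set r : ℝ≥0∞ := (2:ℝ≥0∞) ^ (-(δ/2)) with hr
  have hrlt : r < 1 := ENNReal.rpow_lt_one_of_one_lt_of_neg (by norm_num) (by linarith)
  have hhalf : ∀ x : ℝ≥0∞, x ^ ((1:ℝ)/2) * x ^ ((1:ℝ)/2) = x := fun x => by
    rw [← ENNReal.rpow_add_of_nonneg _ _ (by norm_num) (by norm_num)]
    norm_num
  have hhalfsq : ∀ x : ℝ≥0∞, (x ^ ((1:ℝ)/2)) ^ 2 = x := fun x => by rw [sq, hhalf]
  refine ⟨2 * (Cδ : ℝ≥0∞) ^ ((1:ℝ)/2) * (1 - r)⁻¹, ?_, ?_⟩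
  · refine ENNReal.mul_ne_top (ENNReal.mul_ne_top (by norm_num)
      (ENNReal.rpow_ne_top_of_nonneg (by norm_num) ENNReal.coe_ne_top)) ?_
    rw [Ne, ENNReal.inv_eq_top, tsub_eq_zero_iff_le]
    exact hrlt.not_ge
  intro μ _ F α hF
  set ν : ℤ × ℤ → ℝ≥0∞ := fun q => μ (dyadicInterval q.1 q.2) with hν
  set b : ℤ × ℤ → ℝ≥0∞ := fun q => if q ∈ F then α q else 0 with hb
  set S : ℝ≥0∞ := ∑' q : ℤ × ℤ, b q ^ 4 * ν q with hS
  set u : ℤ × ℤ → ℤ × ℤ → ℝ≥0∞ := fun p q =>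
    if DI p ⊆ DI q then b p ^ 2 * b q ^ 2 * ν p else 0 with hu
  set X : ℤ × ℤ → ℕ → ℝ≥0∞ := fun q n =>
    if q ∈ F then ∑' p : dyadicGen F q n, b p.1 ^ 4 * ν p.1 else 0 with hX
  set g : ℤ × ℤ → ℝ → ℝ≥0∞ :=
    fun q x => b q ^ 2 * (dyadicInterval q.1 q.2).indicator (fun _ => (1:ℝ≥0∞)) x with hg
  have hmeasg : ∀ p : ℤ × ℤ, Measurable (g p) := fun p =>
    (measurable_const.indicator (measurableSet_DI p)).const_mul _
  have hRHS : (∑' q : F, (α q.1) ^ 4 * μ (dyadicInterval q.1.1 q.1.2)) = S := by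
    rw [hS]
    refine (tsum_subtype F fun q => α q ^ 4 * μ (dyadicInterval q.1 q.2)).trans ?_
    apply tsum_congr; intro q
    by_cases hq : q ∈ F
    · simp [Set.indicator_of_mem hq, hb, hq, hν]
    · simp [Set.indicator_of_notMem hq, hb, hq]
  have hptw : ∀ x : ℝ, (∑' q : F,
      (α q.1) ^ 2 * (dyadicInterval q.1.1 q.1.2).indicator (fun _ => (1:ℝ≥0∞)) x)
      = ∑' q : ℤ × ℤ, g q x := by
    intro x
    refine (tsum_subtype F fun q =>
      α q ^ 2 * (dyadicInterval q.1 q.2).indicator (fun _ => (1:ℝ≥0∞)) x).trans ?_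
    apply tsum_congr; intro q
    by_cases hq : q ∈ F
    · simp [Set.indicator_of_mem hq, hg, hb, hq]
    · simp [Set.indicator_of_notMem hq, hg, hb, hq]
  have step1 : ∫⁻ x, (∑' q : ℤ × ℤ, g q x) ^ 2 ∂μ
      = ∑' (p : ℤ × ℤ) (q : ℤ × ℤ), b p ^ 2 * b q ^ 2 * μ (DI p ∩ DI q) := by
    have e1 : ∀ x, (∑' q : ℤ × ℤ, g q x) ^ 2 = ∑' (p : ℤ × ℤ) (q : ℤ × ℤ), g p x * g q x := by
      intro x
      rw [sq, ← ENNReal.tsum_mul_right]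
      exact tsum_congr fun p => ENNReal.tsum_mul_left.symm
    rw [lintegral_congr e1]
    rw [lintegral_tsum (f := fun p x => ∑' q, g p x * g q x) fun p =>
      (Measurable.ennreal_tsum fun q => (hmeasg p).mul (hmeasg q)).aemeasurable]
    apply tsum_congr; intro p
    rw [lintegral_tsum (f := fun q x => g p x * g q x) fun q => ((hmeasg p).mul (hmeasg q)).aemeasurable]
    apply tsum_congr; intro q
    have e2 : ∀ x, g p x * g q x
        = b p ^ 2 * b q ^ 2 * (DI p ∩ DI q).indicator (fun _ => (1:ℝ≥0∞)) x := by
      intro x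
      simp only [hg, Set.indicator_apply, Set.mem_inter_iff]
      by_cases h1 : x ∈ DI p <;> by_cases h2 : x ∈ DI q <;> simp [h1, h2]
    rw [lintegral_congr e2,
      lintegral_const_mul _ (measurable_const.indicator
        ((measurableSet_DI p).inter (measurableSet_DI q))),
      lintegral_indicator_const ((measurableSet_DI p).inter (measurableSet_DI q)), one_mul]
  have step2 : (∑' (p : ℤ × ℤ) (q : ℤ × ℤ), b p ^ 2 * b q ^ 2 * μ (DI p ∩ DI q))
      ≤ 2 * ∑' (q : ℤ × ℤ) (p : ℤ × ℤ), u p q := by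
    have hpq : ∀ p q : ℤ × ℤ, b p ^ 2 * b q ^ 2 * μ (DI p ∩ DI q) ≤ u p q + u q p := by
      intro p q
      rcases dichotomy p q with h | h | h
      · refine le_trans ?_ le_self_add
        simp only [hu]; rw [if_pos h]
        exact mul_le_mul_right (measure_mono Set.inter_subset_left) _
      · refine le_trans ?_ le_add_self
        simp only [hu]; rw [if_pos h]
        calc b p ^ 2 * b q ^ 2 * μ (DI p ∩ DI q)
            ≤ b p ^ 2 * b q ^ 2 * ν q :=
              mul_le_mul_right (measure_mono Set.inter_subset_right) _
          _ = b q ^ 2 * b p ^ 2 * ν q := by ring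
      · rw [h, measure_empty, mul_zero]; exact zero_le
    calc (∑' (p : ℤ × ℤ) (q : ℤ × ℤ), b p ^ 2 * b q ^ 2 * μ (DI p ∩ DI q))
        ≤ ∑' (p : ℤ × ℤ) (q : ℤ × ℤ), (u p q + u q p) :=
          ENNReal.tsum_le_tsum fun p => ENNReal.tsum_le_tsum fun q => hpq p q
      _ = (∑' (p : ℤ × ℤ) (q : ℤ × ℤ), u p q) + ∑' (p : ℤ × ℤ) (q : ℤ × ℤ), u q p := by
          rw [← ENNReal.tsum_add]; exact tsum_congr fun p => ENNReal.tsum_add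
      _ = (∑' (q : ℤ × ℤ) (p : ℤ × ℤ), u p q) + ∑' (q : ℤ × ℤ) (p : ℤ × ℤ), u p q := by
          rw [show (∑' (p : ℤ × ℤ) (q : ℤ × ℤ), u p q)
            = ∑' (q : ℤ × ℤ) (p : ℤ × ℤ), u p q from ENNReal.tsum_comm]
      _ = 2 * ∑' (q : ℤ × ℤ) (p : ℤ × ℤ), u p q := (two_mul _).symm
  have stepV : ∀ q : ℤ × ℤ, (∑' p : ℤ × ℤ, u p q) ≤
      b q ^ 2 * ∑' n : ℕ, (X q n) ^ ((1:ℝ)/2) *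
        ((Cδ : ℝ≥0∞) * (2 : ℝ≥0∞) ^ (-(δ * (n : ℝ))) * ν q) ^ ((1:ℝ)/2) := by
    intro q
    by_cases hq : q ∈ F
    swap
    · have h0 : ∀ p, u p q = 0 := by intro p; simp [hu, hb, hq]
      simp [h0]
    rw [← ENNReal.tsum_fiberwise (fun p => u p q)
      (fun p : ℤ × ℤ => Set.ncard {q' | q' ∈ F ∧ DI p ⊂ DI q' ∧ DI q' ⊆ DI q})]
    rw [← ENNReal.tsum_mul_left]
    apply ENNReal.tsum_le_tsum
    intro n
    have hgen : (∑' p : (fun p : ℤ × ℤ =>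
          Set.ncard {q' | q' ∈ F ∧ DI p ⊂ DI q' ∧ DI q' ⊆ DI q}) ⁻¹' {n}, u p.1 q)
        = ∑' p : dyadicGen F q n, b p.1 ^ 2 * b q ^ 2 * ν p.1 := by
      refine tsum_subtype_mono_eq (s := dyadicGen F q n)
        (t := (fun p : ℤ × ℤ => Set.ncard {q' | q' ∈ F ∧ DI p ⊂ DI q' ∧ DI q' ⊆ DI q}) ⁻¹' {n})
        (fun p => b p ^ 2 * b q ^ 2 * ν p) (fun p => u p q) ?_ ?_ ?_
      · rintro p ⟨hpF, hsub, hcard⟩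
        exact hcard
      · rintro p ⟨hpF, hsub, -⟩
        simp only [hu]; rw [if_pos hsub]
      · intro p hp hnp
        simp only [hu]
        split_ifs with hsub
        · by_cases hpF : p ∈ F
          · exact absurd ⟨hpF, hsub, hp⟩ hnp
          · simp [hb, hpF]
        · rfl
    rw [hgen]
    have hpull : (∑' p : dyadicGen F q n, b p.1 ^ 2 * b q ^ 2 * ν p.1)
        = b q ^ 2 * ∑' p : dyadicGen F q n, b p.1 ^ 2 * ν p.1 := by
      rw [← ENNReal.tsum_mul_left]
      exact tsum_congr fun p => by ring
    rw [hpull]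
    apply mul_le_mul_right
    have hXq : X q n = ∑' p : dyadicGen F q n, b p.1 ^ 4 * ν p.1 := by
      rw [hX]; simp [hq]
    calc (∑' p : dyadicGen F q n, b p.1 ^ 2 * ν p.1)
        = ∑' p : dyadicGen F q n, (b p.1 ^ 2 * (ν p.1) ^ ((1:ℝ)/2)) * ((ν p.1) ^ ((1:ℝ)/2)) :=
          tsum_congr fun p => by rw [mul_assoc, hhalf]
      _ ≤ (∑' p : dyadicGen F q n, (b p.1 ^ 2 * (ν p.1) ^ ((1:ℝ)/2)) ^ 2) ^ ((1:ℝ)/2) *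
          (∑' p : dyadicGen F q n, ((ν p.1) ^ ((1:ℝ)/2)) ^ 2) ^ ((1:ℝ)/2) :=
          tsum_cauchy_schwarz _ _
      _ = (∑' p : dyadicGen F q n, b p.1 ^ 4 * ν p.1) ^ ((1:ℝ)/2) *
          (∑' p : dyadicGen F q n, ν p.1) ^ ((1:ℝ)/2) := by
          congr 1
          · congr 1; exact tsum_congr fun p => by rw [mul_pow, hhalfsq _]; ring
          · congr 1; exact tsum_congr fun p => hhalfsq _
      _ ≤ (X q n) ^ ((1:ℝ)/2) *
          ((Cδ : ℝ≥0∞) * (2 : ℝ≥0∞) ^ (-(δ * (n : ℝ))) * ν q) ^ ((1:ℝ)/2) := by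
          apply mul_le_mul'
          · rw [hXq]
          · exact ENNReal.rpow_le_rpow (hF q hq n) (by norm_num)
  have step6 : ∀ n : ℕ, (∑' q : ℤ × ℤ, X q n) ≤ S := by
    intro n
    have hXeq : ∀ q : ℤ × ℤ, X q n
        = ∑' p : ℤ × ℤ, (if q ∈ F ∧ p ∈ dyadicGen F q n then b p ^ 4 * ν p else 0) := by
      intro q
      by_cases hq : q ∈ F
      · have h1 : X q n = ∑' p : dyadicGen F q n, b p.1 ^ 4 * ν p.1 := by rw [hX]; simp [hq]
        rw [h1]
        refine (tsum_subtype (dyadicGen F q n) fun p => b p ^ 4 * ν p).trans ?_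
        apply tsum_congr; intro p
        by_cases hp : p ∈ dyadicGen F q n
        · simp [Set.indicator_of_mem hp, hq, hp]
        · simp [Set.indicator_of_notMem hp, hp]
      · have h1 : X q n = 0 := by rw [hX]; simp [hq]
        rw [h1]
        symm
        simp [hq]
    rw [tsum_congr hXeq, ENNReal.tsum_comm, hS]
    apply ENNReal.tsum_le_tsum
    intro p
    exact tsum_ite_le _ _ (fun a c ha hc => gen_unique ha.1 hc.1 ha.2 hc.2)
  have step5 : ∀ n : ℕ, (∑' q : ℤ × ℤ, b q ^ 2 * ((X q n) ^ ((1:ℝ)/2) *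
        ((Cδ : ℝ≥0∞) * (2 : ℝ≥0∞) ^ (-(δ * (n : ℝ))) * ν q) ^ ((1:ℝ)/2)))
      ≤ ((Cδ : ℝ≥0∞) * (2 : ℝ≥0∞) ^ (-(δ * (n : ℝ)))) ^ ((1:ℝ)/2) * S := by
    intro n
    have hsplit : ∀ q : ℤ × ℤ, b q ^ 2 * ((X q n) ^ ((1:ℝ)/2) *
          ((Cδ : ℝ≥0∞) * (2 : ℝ≥0∞) ^ (-(δ * (n : ℝ))) * ν q) ^ ((1:ℝ)/2))
        = ((Cδ : ℝ≥0∞) * (2 : ℝ≥0∞) ^ (-(δ * (n : ℝ)))) ^ ((1:ℝ)/2) *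
          ((b q ^ 2 * (ν q) ^ ((1:ℝ)/2)) * (X q n) ^ ((1:ℝ)/2)) := by
      intro q
      rw [ENNReal.mul_rpow_of_nonneg _ _ (by norm_num : (0:ℝ) ≤ 1/2)]
      ring
    rw [tsum_congr hsplit, ENNReal.tsum_mul_left]
    apply mul_le_mul_right
    calc (∑' q : ℤ × ℤ, (b q ^ 2 * (ν q) ^ ((1:ℝ)/2)) * (X q n) ^ ((1:ℝ)/2))
        ≤ (∑' q : ℤ × ℤ, (b q ^ 2 * (ν q) ^ ((1:ℝ)/2)) ^ 2) ^ ((1:ℝ)/2) *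
          (∑' q : ℤ × ℤ, ((X q n) ^ ((1:ℝ)/2)) ^ 2) ^ ((1:ℝ)/2) := tsum_cauchy_schwarz _ _
      _ = (∑' q : ℤ × ℤ, b q ^ 4 * ν q) ^ ((1:ℝ)/2) *
          (∑' q : ℤ × ℤ, X q n) ^ ((1:ℝ)/2) := by
          congr 1
          · congr 1; exact tsum_congr fun q => by rw [mul_pow, hhalfsq _]; ring
          · congr 1; exact tsum_congr fun q => hhalfsq _
      _ ≤ S ^ ((1:ℝ)/2) * S ^ ((1:ℝ)/2) := by
          apply mul_le_mul'
          · rw [hS]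
          · exact ENNReal.rpow_le_rpow (step6 n) (by norm_num)
      _ = S := hhalf S
  have step7 : (∑' n : ℕ, ((Cδ : ℝ≥0∞) * (2 : ℝ≥0∞) ^ (-(δ * (n : ℝ)))) ^ ((1:ℝ)/2))
      = (Cδ : ℝ≥0∞) ^ ((1:ℝ)/2) * (1 - r)⁻¹ := by
    have h1 : ∀ n : ℕ, ((Cδ : ℝ≥0∞) * (2 : ℝ≥0∞) ^ (-(δ * (n : ℝ)))) ^ ((1:ℝ)/2)
        = (Cδ : ℝ≥0∞) ^ ((1:ℝ)/2) * r ^ n := by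
      intro n
      rw [ENNReal.mul_rpow_of_nonneg _ _ (by norm_num : (0:ℝ) ≤ 1/2)]
      congr 1
      rw [← ENNReal.rpow_natCast r n, hr, ← ENNReal.rpow_mul, ← ENNReal.rpow_mul]
      congr 1
      ring
    rw [tsum_congr h1, ENNReal.tsum_mul_left, ENNReal.tsum_geometric]
  calc ∫⁻ x, (∑' q : F,
        (α q.1) ^ 2 * (dyadicInterval q.1.1 q.1.2).indicator (fun _ => (1:ℝ≥0∞)) x) ^ 2 ∂μ
      = ∫⁻ x, (∑' q : ℤ × ℤ, g q x) ^ 2 ∂μ := lintegral_congr fun x => by rw [hptw x]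
    _ = ∑' (p : ℤ × ℤ) (q : ℤ × ℤ), b p ^ 2 * b q ^ 2 * μ (DI p ∩ DI q) := step1
    _ ≤ 2 * ∑' (q : ℤ × ℤ) (p : ℤ × ℤ), u p q := step2
    _ ≤ 2 * ∑' q : ℤ × ℤ, (b q ^ 2 * ∑' n : ℕ, (X q n) ^ ((1:ℝ)/2) *
          ((Cδ : ℝ≥0∞) * (2 : ℝ≥0∞) ^ (-(δ * (n : ℝ))) * ν q) ^ ((1:ℝ)/2)) :=
        mul_le_mul_right (ENNReal.tsum_le_tsum stepV) _
    _ = 2 * ∑' (q : ℤ × ℤ) (n : ℕ), b q ^ 2 * ((X q n) ^ ((1:ℝ)/2) *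
          ((Cδ : ℝ≥0∞) * (2 : ℝ≥0∞) ^ (-(δ * (n : ℝ))) * ν q) ^ ((1:ℝ)/2)) := by
        rw [show (∑' q : ℤ × ℤ, (b q ^ 2 * ∑' n : ℕ, (X q n) ^ ((1:ℝ)/2) *
            ((Cδ : ℝ≥0∞) * (2 : ℝ≥0∞) ^ (-(δ * (n : ℝ))) * ν q) ^ ((1:ℝ)/2)))
          = ∑' (q : ℤ × ℤ) (n : ℕ), b q ^ 2 * ((X q n) ^ ((1:ℝ)/2) *
            ((Cδ : ℝ≥0∞) * (2 : ℝ≥0∞) ^ (-(δ * (n : ℝ))) * ν q) ^ ((1:ℝ)/2))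
          from tsum_congr fun q => ENNReal.tsum_mul_left.symm]
    _ = 2 * ∑' (n : ℕ) (q : ℤ × ℤ), b q ^ 2 * ((X q n) ^ ((1:ℝ)/2) *
          ((Cδ : ℝ≥0∞) * (2 : ℝ≥0∞) ^ (-(δ * (n : ℝ))) * ν q) ^ ((1:ℝ)/2)) := by
        rw [ENNReal.tsum_comm]
    _ ≤ 2 * ∑' n : ℕ, ((Cδ : ℝ≥0∞) * (2 : ℝ≥0∞) ^ (-(δ * (n : ℝ)))) ^ ((1:ℝ)/2) * S :=
        mul_le_mul_right (ENNReal.tsum_le_tsum step5) _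
    _ = 2 * ((Cδ : ℝ≥0∞) ^ ((1:ℝ)/2) * (1 - r)⁻¹ * S) := by
        rw [ENNReal.tsum_mul_right, step7]
    _ = 2 * (Cδ : ℝ≥0∞) ^ ((1:ℝ)/2) * (1 - r)⁻¹ *
        (∑' q : F, (α q.1) ^ 4 * μ (dyadicInterval q.1.1 q.1.2)) := by
        rw [hRHS]; ring
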